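/- For every rational point (x, y) on the curve y² = x³ − 36x with y ≠ 0, one has x ∉ {0, 6, −6} and x² − 12x − 36 ≠ 0 and x² + 12x − 36 ≠ 0; consequently the associated quadruple t = x² − 12x − 36, V = x² + 12x − 36, U = 4y(x² + 36)/t gives a solution (U + t, U − t, U, V) of X⁴ + Y⁴ = 2(U⁴ + V⁴) with all four entries nonzero. -/

import Mathlib

lemma aux_not_rat_sq {n : ℕ} (hn : Nat.Prime n) (q : ℚ) : q ^ 2 ≠ (n : ℚ) := by
  intro hq
  have hirr : Irrational (Real.sqrt n) := hn.irrational_sqrt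
  have hsq : ((|q| : ℚ) : ℝ) ^ 2 = (n : ℝ) := by
    push_cast
    rw [sq_abs]
    exact_mod_cast hq
  have : Real.sqrt n = ((|q| : ℚ) : ℝ) := by
    rw [← hsq, Real.sqrt_sq (by positivity)]
  exact hirr ⟨|q|, this.symm⟩

/-- A rational point `(x, y)` on `y² = x³ − 36x` with `y ≠ 0` has
`x ∉ {0, 6, −6}`, `x² − 12x − 36 ≠ 0`, `x² + 12x − 36 ≠ 0`, and the associated
quadruple `(U + t, U − t, U, V)` with `t = x² − 12x − 36`, `V = x² + 12x − 36`,
`U = 4y(x² + 36)/t` is a solution of `X⁴ + Y⁴ = 2(U⁴ + V⁴)` with all four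
entries nonzero. -/
theorem nontrivial_solution_from_E6 (x y : ℚ) (h : y ^ 2 = x ^ 3 - 36 * x)
    (hy : y ≠ 0) :
    x ≠ 0 ∧ x ≠ 6 ∧ x ≠ -6 ∧
    x ^ 2 - 12 * x - 36 ≠ 0 ∧ x ^ 2 + 12 * x - 36 ≠ 0 ∧
    (let t : ℚ := x ^ 2 - 12 * x - 36
     let V : ℚ := x ^ 2 + 12 * x - 36
     let U : ℚ := 4 * y * (x ^ 2 + 36) / t
     (U + t) ^ 4 + (U - t) ^ 4 = 2 * (U ^ 4 + V ^ 4) ∧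
       U + t ≠ 0 ∧ U - t ≠ 0 ∧ U ≠ 0 ∧ V ≠ 0) := by
  have hy2 : y ^ 2 ≠ 0 := pow_ne_zero 2 hy
  have hx0 : x ≠ 0 := by rintro rfl; apply hy2; rw [h]; ring
  have hx6 : x ≠ 6 := by rintro rfl; apply hy2; rw [h]; norm_num
  have hx6' : x ≠ -6 := by rintro rfl; apply hy2; rw [h]; norm_num
  have h2 : Nat.Prime 2 := by norm_num
  have h7 : Nat.Prime 7 := by norm_num
  have ht : x ^ 2 - 12 * x - 36 ≠ 0 := by
    intro ht0
    apply aux_not_rat_sq h2 ((x - 6) / 6)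
    push_cast
    field_simp
    linear_combination ht0
  have hV : x ^ 2 + 12 * x - 36 ≠ 0 := by
    intro hV0
    apply aux_not_rat_sq h2 ((x + 6) / 6)
    push_cast
    field_simp
    linear_combination hV0
  refine ⟨hx0, hx6, hx6', ht, hV, ?_⟩
  intro t V U
  have hUt : U * t = 4 * y * (x ^ 2 + 36) := div_mul_cancel₀ _ ht
  have hx36 : x ^ 2 + 36 ≠ 0 := by positivity
  have hU : U ≠ 0 := div_ne_zero (by simp [hy, hx36]) ht
  have key : (U + t) ^ 4 + (U - t) ^ 4 = 2 * (U ^ 4 + V ^ 4) := by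
    have h6 : 6 * (U * t) ^ 2 = V ^ 4 - t ^ 4 := by
      rw [hUt]
      show 6 * (4 * y * (x ^ 2 + 36)) ^ 2 =
        (x ^ 2 + 12 * x - 36) ^ 4 - (x ^ 2 - 12 * x - 36) ^ 4
      linear_combination (96 * (x ^ 2 + 36) ^ 2) * h
    linear_combination 2 * h6
  refine ⟨key, ?_, ?_, hU, hV⟩
  · intro hUp
    have hU' : U = -t := by linarith [eq_neg_of_add_eq_zero_left hUp]
    apply aux_not_rat_sq h7 (V ^ 2 / t ^ 2)
    push_cast
    have ht' : t ≠ 0 := ht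
    field_simp
    rw [hU'] at key
    linear_combination (-1/2 : ℚ) * key
  · intro hUm
    have hU' : U = t := by linarith [sub_eq_zero.mp hUm]
    apply aux_not_rat_sq h7 (V ^ 2 / t ^ 2)
    push_cast
    have ht' : t ≠ 0 := ht
    field_simp
    rw [hU'] at key
    linear_combination (-1/2 : ℚ) * key
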